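/- Let ℓ be odd and ε a primitive ℓ-th root of unity. The function Φ(z) = ∏_{m=1}^{ℓ} (1 - ε^{2m} z)^{-m/ℓ} (defined as a power series in z via the principal branch of (1-w)^{-m/ℓ}) satisfies the difference equation Φ(ε^2 z) = (1 - z^ℓ)^{1/ℓ} (1 - ε^2 z)^{-1} Φ(z) as formal power series in z. -/

import Mathlib

open Finset Complex

private lemma sum_shift_aux (ℓ : ℕ) (F : ℕ → ℂ) :
    ∑ m ∈ Icc 1 ℓ, F (m + 1) = ∑ m ∈ Icc 1 ℓ, F m - F 1 + F (ℓ + 1) := by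
  have h1 : ∑ m ∈ Icc 1 ℓ, F (m + 1) = ∑ m ∈ Icc 2 (ℓ + 1), F m := by
    rw [← Finset.map_add_right_Icc 1 ℓ 1, Finset.sum_map]
    rfl
  have h2 : Icc 2 (ℓ + 1) = Ioc 1 (ℓ + 1) := by
    rw [← Finset.Icc_add_one_left_eq_Ioc]
    rfl
  have h3 : F 1 + ∑ m ∈ Ioc 1 (ℓ + 1), F m = ∑ m ∈ Icc 1 (ℓ + 1), F m :=
    Finset.add_sum_Ioc_eq_sum_Icc (by omega)
  have h4 : ∑ m ∈ Icc 1 (ℓ + 1), F m = ∑ m ∈ Icc 1 ℓ, F m + F (ℓ + 1) :=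
    Finset.sum_Icc_succ_top (by omega) F
  rw [h1, h2]
  rw [h4] at h3
  linear_combination h3

private lemma sum_shift (ℓ : ℕ) (hpos : 0 < ℓ) (g : ℕ → ℂ) (hg : g (ℓ + 1) = g 1) :
    ∑ m ∈ Icc 1 ℓ, (-(m : ℂ) / ℓ) * g (m + 1)
      = ∑ m ∈ Icc 1 ℓ, (-(m : ℂ) / ℓ) * g m + (ℓ : ℂ)⁻¹ * ∑ m ∈ Icc 1 ℓ, g m - g 1 := by
  have hℓ : (ℓ : ℂ) ≠ 0 := Nat.cast_ne_zero.mpr hpos.ne'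
  have step : ∀ m ∈ Icc 1 ℓ, (-(m : ℂ) / ℓ) * g (m + 1)
      = (fun k : ℕ => (-(k : ℂ) / ℓ) * g k) (m + 1)
        + (fun k : ℕ => (ℓ : ℂ)⁻¹ * g k) (m + 1) := by
    intro m _
    simp only
    push_cast
    field_simp
    ring
  rw [Finset.sum_congr rfl step, Finset.sum_add_distrib,
    sum_shift_aux ℓ (fun k : ℕ => (-(k : ℂ) / ℓ) * g k),
    sum_shift_aux ℓ (fun k : ℕ => (ℓ : ℂ)⁻¹ * g k), ← Finset.mul_sum]
  simp only [hg]
  push_cast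
  field_simp
  ring

private lemma prod_identity (ℓ : ℕ) (hpos : 0 < ℓ) (ζ : ℂ) (hζ : IsPrimitiveRoot ζ ℓ)
    (z : ℂ) : ∏ m ∈ Icc 1 ℓ, (1 - ζ ^ m * z) = 1 - z ^ ℓ := by
  have key : (Polynomial.X ^ ℓ - Polynomial.C (z ^ ℓ) : Polynomial ℂ)
      = ∏ i ∈ Finset.range ℓ, (Polynomial.X - Polynomial.C (ζ ^ i * z)) :=
    X_pow_sub_C_eq_prod hζ hpos rfl
  have hev := congrArg (Polynomial.eval 1) key
  simp only [Polynomial.eval_sub, Polynomial.eval_pow, Polynomial.eval_X, Polynomial.eval_C,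
    Polynomial.eval_prod, one_pow] at hev
  rw [hev]
  obtain ⟨n, rfl⟩ := Nat.exists_eq_succ_of_ne_zero hpos.ne'
  have h1 : ∏ m ∈ Icc 1 (n + 1), (1 - ζ ^ m * z)
      = ∏ i ∈ Finset.range (n + 1), (1 - ζ ^ (i + 1) * z) := by
    rw [← Finset.Ico_add_one_right_eq_Icc, Finset.prod_Ico_eq_prod_range]
    simp [add_comm 1]
  rw [h1, Finset.prod_range_succ, Finset.prod_range_succ' (fun i => 1 - ζ ^ i * z)]
  have hz : ζ ^ (n + 1) = 1 := hζ.pow_eq_one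
  rw [hz, pow_zero]

private lemma log_sum_eq (ℓ : ℕ) (hpos : 0 < ℓ) (ζ : ℂ) (hζ : IsPrimitiveRoot ζ ℓ) :
    ∃ r > (0 : ℝ), r ≤ 1 ∧ ∀ z : ℂ, ‖z‖ < r →
      ∑ m ∈ Icc 1 ℓ, Complex.log (1 - ζ ^ m * z) = Complex.log (1 - z ^ ℓ) := by
  have hζn : ‖ζ‖ = 1 := Complex.norm_eq_one_of_pow_eq_one hζ.pow_eq_one hpos.ne'
  set g : ℂ → ℂ := fun z => (∑ m ∈ Icc 1 ℓ, Complex.log (1 - ζ ^ m * z)) - Complex.log (1 - z ^ ℓ)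
    with hgdef
  have hcont : ContinuousAt g 0 := by
    apply ContinuousAt.sub
    · exact tendsto_finset_sum _ fun m _ =>
        ContinuousAt.clog (by fun_prop) (by simp)
    · exact ContinuousAt.clog (by fun_prop) (by simp [zero_pow hpos.ne'])
  have hg0 : g 0 = 0 := by
    simp [hgdef, zero_pow hpos.ne', Complex.log_one]
  rw [Metric.continuousAt_iff] at hcont
  obtain ⟨δ, hδpos, hδ⟩ := hcont (2 * Real.pi) (by positivity)
  refine ⟨min δ 1, lt_min hδpos one_pos, min_le_right _ _, fun z hz => ?_⟩
  have hz1 : ‖z‖ < 1 := lt_of_lt_of_le hz (min_le_right _ _)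
  have hzδ : ‖z‖ < δ := lt_of_lt_of_le hz (min_le_left _ _)
  have hne : ∀ m ∈ Icc 1 ℓ, (1 : ℂ) - ζ ^ m * z ≠ 0 := by
    intro m _ h
    have : ‖ζ ^ m * z‖ < 1 := by
      rw [norm_mul, norm_pow, hζn, one_pow, one_mul]; exact hz1
    rw [sub_eq_zero] at h
    rw [← h] at this
    simp at this
  have hneℓ : (1 : ℂ) - z ^ ℓ ≠ 0 := by
    intro h
    have : ‖z ^ ℓ‖ < 1 := by
      rw [norm_pow]
      exact pow_lt_one₀ (norm_nonneg z) hz1 hpos.ne'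
    rw [sub_eq_zero] at h
    rw [← h] at this
    simp at this
  have hexp : Complex.exp (g z) = 1 := by
    rw [hgdef]
    simp only
    rw [Complex.exp_sub, Complex.exp_sum]
    rw [Finset.prod_congr rfl (fun m hm => Complex.exp_log (hne m hm)),
      Complex.exp_log hneℓ, prod_identity ℓ hpos ζ hζ z, div_self hneℓ]
  rw [Complex.exp_eq_one_iff] at hexp
  obtain ⟨n, hn⟩ := hexp
  have hnorm : ‖g z‖ < 2 * Real.pi := by
    have := hδ (x := z) (by simpa [dist_eq_norm] using hzδ)
    simpa [hg0, dist_eq_norm] using this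
  rw [hn] at hnorm
  have hlt : |(n : ℝ)| * (2 * Real.pi) < 2 * Real.pi := by
    simpa [norm_mul, Complex.norm_intCast, abs_of_pos Real.pi_pos,
      Complex.norm_I, mul_assoc] using hnorm
  have hn0 : n = 0 := by
    by_contra h
    have h1 : (1 : ℝ) ≤ |(n : ℝ)| := by
      rw [← Int.cast_abs]
      exact_mod_cast Int.one_le_abs (by omega)
    nlinarith [Real.two_pi_pos]
  rw [hn0] at hn
  simp only [Int.cast_zero, zero_mul] at hn
  rw [hgdef] at hn
  exact sub_eq_zero.mp hn

/-- The function `Φ(z) = ∏_{m=1}^ℓ (1-ε^{2m}z)^{-m/ℓ}`, written as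
`exp (∑_{m=1}^ℓ (-m/ℓ) log(1-ε^{2m}z))`, satisfies the difference equation
`Φ(ε²z) = (1-zℓ)^{1/ℓ} (1-ε²z)⁻¹ Φ(z)` for z in a neighbourhood of 0. -/
theorem Phi_difference_equation (ℓ : ℕ) (hpos : 0 < ℓ) (hodd : Odd ℓ) (ε : ℂ)
    (hε : IsPrimitiveRoot ε ℓ) :
    ∃ r > (0 : ℝ), ∀ z : ℂ, ‖z‖ < r →
      Complex.exp (∑ m ∈ Finset.Icc 1 ℓ, (-(m : ℂ) / ℓ) * Complex.log (1 - ε ^ (2 * m) * (ε ^ 2 * z)))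
        = (1 - z ^ ℓ) ^ ((ℓ : ℂ)⁻¹) * (1 - ε ^ 2 * z)⁻¹ *
          Complex.exp (∑ m ∈ Finset.Icc 1 ℓ, (-(m : ℂ) / ℓ) * Complex.log (1 - ε ^ (2 * m) * z)) := by
  set ζ : ℂ := ε ^ 2 with hζdef
  have hζ : IsPrimitiveRoot ζ ℓ := hε.pow_of_coprime 2 (Nat.coprime_two_left.mpr hodd)
  obtain ⟨r, hrpos, hr1, hlog⟩ := log_sum_eq ℓ hpos ζ hζ
  refine ⟨r, hrpos, fun z hz => ?_⟩
  have hζn : ‖ζ‖ = 1 := Complex.norm_eq_one_of_pow_eq_one hζ.pow_eq_one hpos.ne'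
  have hz1 : ‖z‖ < 1 := lt_of_lt_of_le hz hr1
  set L : ℕ → ℂ := fun k => Complex.log (1 - ζ ^ k * z) with hLdef
  have hLper : L (ℓ + 1) = L 1 := by
    show Complex.log (1 - ζ ^ (ℓ + 1) * z) = Complex.log (1 - ζ ^ 1 * z)
    rw [pow_succ, hζ.pow_eq_one, one_mul, pow_one]
  have hεm : ∀ m : ℕ, ε ^ (2 * m) = ζ ^ m := fun m => by
    rw [hζdef, ← pow_mul]
  have hlhs : ∀ m : ℕ, Complex.log (1 - ε ^ (2 * m) * (ζ * z)) = L (m + 1) := by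
    intro m
    rw [hεm, hLdef]
    simp only [pow_succ]
    congr 1
    ring
  have hrhs : ∀ m : ℕ, Complex.log (1 - ε ^ (2 * m) * z) = L m := by
    intro m
    rw [hεm, hLdef]
  simp only [hlhs, hrhs]
  rw [sum_shift ℓ hpos L hLper]
  have hSg : ∑ m ∈ Icc 1 ℓ, L m = Complex.log (1 - z ^ ℓ) := hlog z hz
  rw [hSg]
  have hne1 : (1 : ℂ) - ζ * z ≠ 0 := by
    intro h
    have : ‖ζ * z‖ < 1 := by rw [norm_mul, hζn, one_mul]; exact hz1
    rw [sub_eq_zero] at h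
    rw [← h] at this
    simp at this
  have hneℓ : (1 : ℂ) - z ^ ℓ ≠ 0 := by
    intro h
    have : ‖z ^ ℓ‖ < 1 := by
      rw [norm_pow]; exact pow_lt_one₀ (norm_nonneg z) hz1 hpos.ne'
    rw [sub_eq_zero] at h
    rw [← h] at this
    simp at this
  have hcpow : (1 - z ^ ℓ) ^ ((ℓ : ℂ)⁻¹)
      = Complex.exp ((ℓ : ℂ)⁻¹ * Complex.log (1 - z ^ ℓ)) := by
    rw [Complex.cpow_def_of_ne_zero hneℓ, mul_comm]
  have hL1 : Complex.exp (L 1) = 1 - ζ * z := by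
    rw [hLdef]
    simp only [pow_one]
    exact Complex.exp_log hne1
  rw [sub_eq_add_neg, Complex.exp_add, Complex.exp_add, Complex.exp_neg, hL1, hcpow]
  ring
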